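/- Let S be a 5×5 Seidel matrix. If |det S| = 4, then S² has constant diagonal equal to 4, i.e., every row of S, viewed as a vector in ℝ⁵, has squared norm 4, and moreover det(S) = 4 implies S is switching-equivalent to J - I: there exist a diagonal matrix D with entries in {1,-1} and a permutation matrix Pσ such that S = D·Pσ·(J - I)·Pσᵀ·D. -/

import Mathlib

open Matrix

private lemma v30 : ((0 : Fin 3) : ℕ) = 0 := rfl
private lemma v31 : ((1 : Fin 3) : ℕ) = 1 := rfl
private lemma v32 : ((2 : Fin 3) : ℕ) = 2 := rfl
private lemma v40 : ((0 : Fin 4) : ℕ) = 0 := rfl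
private lemma v41 : ((1 : Fin 4) : ℕ) = 1 := rfl
private lemma v42 : ((2 : Fin 4) : ℕ) = 2 := rfl
private lemma v43 : ((3 : Fin 4) : ℕ) = 3 := rfl
private lemma v50 : ((0 : Fin 5) : ℕ) = 0 := rfl
private lemma v51 : ((1 : Fin 5) : ℕ) = 1 := rfl
private lemma v52 : ((2 : Fin 5) : ℕ) = 2 := rfl
private lemma v53 : ((3 : Fin 5) : ℕ) = 3 := rfl
private lemma v54 : ((4 : Fin 5) : ℕ) = 4 := rfl

set_option maxHeartbeats 4000000 in
private lemma det5 (a b c e f g : ℤ) :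
    Matrix.det !![0,1,1,1,1; 1,0,a,b,c; 1,a,0,e,f; 1,b,e,0,g; 1,c,f,g,0] =
      -2*e*f*g + 2*c*e*g + 2*c*e*f - 2*c*e*e - 2*c*c*e + 2*b*f*g - 2*b*f*f
      + 2*b*e*f - 2*b*c*g + 2*b*c*f + 2*b*c*e - 2*b*b*f - 2*a*g*g + 2*a*f*g
      + 2*a*e*g + 2*a*c*g - 2*a*c*f + 2*a*c*e + 2*a*b*g + 2*a*b*f - 2*a*b*e
      - 2*a*a*g := by
  simp [Matrix.det_succ_row_zero, Fin.sum_univ_succ, Fin.succAbove]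
  ring

private lemma key5 (a b c e f g : ℤ)
    (ha : a = 1 ∨ a = -1) (hb : b = 1 ∨ b = -1) (hc : c = 1 ∨ c = -1)
    (he : e = 1 ∨ e = -1) (hf : f = 1 ∨ f = -1) (hg : g = 1 ∨ g = -1)
    (h : Matrix.det !![0,1,1,1,1; 1,0,a,b,c; 1,a,0,e,f; 1,b,e,0,g; 1,c,f,g,0] = 4) :
    a = 1 ∧ b = 1 ∧ c = 1 ∧ e = 1 ∧ f = 1 ∧ g = 1 := by
  rw [det5] at h
  rcases ha with rfl | rfl <;> rcases hb with rfl | rfl <;> rcases hc with rfl | rfl <;>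
    rcases he with rfl | rfl <;> rcases hf with rfl | rfl <;> rcases hg with rfl | rfl <;>
    revert h <;> norm_num

set_option maxHeartbeats 4000000 in
/-- For a 5×5 Seidel matrix `S`: if `|det S| = 4` then every diagonal entry of `S²`
equals 4 (each row has squared norm 4); and if `det S = 4` then `S` is
switching-equivalent to `K5 = J - I`. -/
theorem seidel_five_det_four (S : Matrix (Fin 5) (Fin 5) ℤ)
    (hsymm : S.IsSymm) (hdiag : ∀ i, S i i = 0)
    (hoff : ∀ i j, i ≠ j → S i j = 1 ∨ S i j = -1) :
    (|S.det| = 4 → ∀ i, (S * S) i i = 4) ∧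
    (S.det = 4 →
      ∃ (d : Fin 5 → ℤ) (σ : Equiv.Perm (Fin 5)),
        (∀ i, d i = 1 ∨ d i = -1) ∧
        S = Matrix.diagonal d * σ.permMatrix ℤ
              * ((Matrix.of fun _ _ => (1 : ℤ)) - 1)
              * (σ.permMatrix ℤ)ᵀ * Matrix.diagonal d) := by
  have hsymm' : ∀ i j, S j i = S i j := by
    intro i j
    have := congrFun (congrFun hsymm i) j
    simpa using this
  have hsq : ∀ i j, i ≠ j → S i j * S j i = 1 := by
    intro i j h
    rw [hsymm' i j]
    rcases hoff i j h with h' | h' <;> rw [h'] <;> ring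
  constructor
  · intro _ i
    rw [Matrix.mul_apply]
    have key : ∀ j, S i j * S j i = if j = i then 0 else 1 := by
      intro j
      split
      · subst ‹j = i›; simp [hdiag]
      · exact hsq i j (fun h => ‹¬ j = i› h.symm)
    simp only [key]
    fin_cases i <;> decide
  · intro hdet
    set d : Fin 5 → ℤ := fun i => if i = 0 then 1 else S i 0 with hd_def
    have hd : ∀ i, d i = 1 ∨ d i = -1 := by
      intro i
      by_cases h : i = 0
      · left; simp [hd_def, h]
      · simp only [hd_def, if_neg h]; exact hoff i 0 h
    have hd2 : ∀ i, d i * d i = 1 := by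
      intro i; rcases hd i with h | h <;> rw [h] <;> ring
    set T := Matrix.diagonal d * S * Matrix.diagonal d with hT_def
    have hT : ∀ i j, T i j = d i * S i j * d j := by
      intro i j
      rw [hT_def, Matrix.mul_diagonal, Matrix.diagonal_mul]
    have hTdiag : ∀ i, T i i = 0 := by
      intro i; rw [hT, hdiag]; ring
    have hTfirst : ∀ j, j ≠ 0 → T 0 j = 1 := by
      intro j hj
      rw [hT]
      have h0 : d 0 = 1 := by simp [hd_def]
      have h1 : d j = S j 0 := by simp [hd_def, hj]
      rw [h0, h1, one_mul]
      exact hsq 0 j (fun h => hj h.symm)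
    have hTcol : ∀ j, j ≠ 0 → T j 0 = 1 := by
      intro j hj
      rw [hT]
      have h0 : d 0 = 1 := by simp [hd_def]
      have h1 : d j = S j 0 := by simp [hd_def, hj]
      rw [h0, h1, mul_one]
      have := hsq j 0 hj
      rw [hsymm' j 0] at this
      linarith [this]
    have hTsym : ∀ i j, T j i = T i j := by
      intro i j; rw [hT, hT, hsymm' i j]; ring
    have hToff : ∀ i j, i ≠ j → T i j = 1 ∨ T i j = -1 := by
      intro i j h
      rcases hd i with hi | hi <;> rcases hd j with hj | hj <;>
        rcases hoff i j h with hx | hx <;> rw [hT i j, hi, hj, hx] <;> norm_num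
    have hdetT : T.det = 4 := by
      rw [hT_def, Matrix.det_mul, Matrix.det_mul, Matrix.det_diagonal, hdet]
      have h1 : (∏ i, d i) * (∏ i, d i) = 1 := by
        rw [← Finset.prod_mul_distrib]
        exact Finset.prod_eq_one (fun i _ => hd2 i)
      calc (∏ i, d i) * 4 * (∏ i, d i) = 4 * ((∏ i, d i) * (∏ i, d i)) := by ring
        _ = 4 := by rw [h1]; ring
    have hTM : T = !![0, 1, 1, 1, 1;
                      1, 0, T 1 2, T 1 3, T 1 4;
                      1, T 1 2, 0, T 2 3, T 2 4;
                      1, T 1 3, T 2 3, 0, T 3 4;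
                      1, T 1 4, T 2 4, T 3 4, 0] := by
      ext i j
      fin_cases i <;> fin_cases j <;>
        simp only [Matrix.cons_val', Matrix.cons_val_zero, Matrix.cons_val_one,
          Matrix.head_cons, Matrix.head_fin_const, Matrix.empty_val',
          Matrix.cons_val_fin_one, Matrix.cons_val_succ, Fin.isValue] <;>
        first
          | exact hTdiag _
          | exact hTfirst _ (by decide)
          | exact hTcol _ (by decide)
          | exact hTsym _ _
          | rfl
    rw [hTM] at hdetT
    obtain ⟨ha, hb, hc, he, hf, hg⟩ := key5 _ _ _ _ _ _
      (hToff 1 2 (by decide)) (hToff 1 3 (by decide)) (hToff 1 4 (by decide))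
      (hToff 2 3 (by decide)) (hToff 2 4 (by decide)) (hToff 3 4 (by decide)) hdetT
    have hJ : ((Matrix.of fun _ _ => (1:ℤ)) - 1 : Matrix (Fin 5) (Fin 5) ℤ) =
        !![0,1,1,1,1; 1,0,1,1,1; 1,1,0,1,1; 1,1,1,0,1; 1,1,1,1,0] := by
      ext i j
      fin_cases i <;> fin_cases j <;>
        simp [Matrix.sub_apply, Matrix.one_apply, Matrix.vecHead, Matrix.vecTail]
    have hTJ : T = (Matrix.of fun _ _ => (1:ℤ)) - 1 := by
      rw [hJ, hTM, ha, hb, hc, he, hf, hg]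
    have hDD : Matrix.diagonal d * Matrix.diagonal d = 1 := by
      rw [Matrix.diagonal_mul_diagonal,
        show (fun i => d i * d i) = fun _ => (1:ℤ) from funext hd2]
      exact Matrix.diagonal_one
    have hS : S = Matrix.diagonal d * T * Matrix.diagonal d := by
      calc S = 1 * S * 1 := by rw [Matrix.one_mul, Matrix.mul_one]
        _ = (Matrix.diagonal d * Matrix.diagonal d) * S
              * (Matrix.diagonal d * Matrix.diagonal d) := by rw [hDD]
        _ = Matrix.diagonal d * (Matrix.diagonal d * S * Matrix.diagonal d)
              * Matrix.diagonal d := by simp only [Matrix.mul_assoc]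
        _ = Matrix.diagonal d * T * Matrix.diagonal d := by rw [← hT_def]
    have hP : ((1 : Equiv.Perm (Fin 5)).permMatrix ℤ) = 1 := by
      ext i j
      simp [Equiv.Perm.permMatrix, PEquiv.toMatrix, Equiv.toPEquiv, Matrix.one_apply,
        PEquiv.coe_mk, Option.mem_def, eq_comm]
    refine ⟨d, 1, hd, ?_⟩
    rw [hP, Matrix.transpose_one, Matrix.mul_one, Matrix.mul_one, ← hTJ]
    exact hS
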